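/- arXiv:1606.08262 — 8 statements merged into one kernel-verified Lean document; each statement's English description precedes it below -/
import Mathlib

section
/- If the action of G on X is not locally finite (i.e., there is a finitely generated subgroup H of G and a point x ∈ X whose H-orbit is infinite), then some subset of X is equidecomposable with a proper subset of itself. -/
open Pointwise

/-- Two subsets `A`, `B` of a `G`-set `X` are equidecomposable if there are finite
partitions `{A_i}` of `A` and `{B_i}` of `B` and elements `s_i ∈ G` with `B_i = s_i • A_i`. -/
def SetEquidecomp (G : Type*) {X : Type*} [Group G] [MulAction G X] (A B : Set X) : Prop :=
  ∃ (n : ℕ) (As Bs : Fin n → Set X) (s : Fin n → G),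
    (⋃ i, As i) = A ∧ (⋃ i, Bs i) = B ∧
    Pairwise (Function.onFun Disjoint As) ∧ Pairwise (Function.onFun Disjoint Bs) ∧
    ∀ i, Bs i = (s i) • As i

/-- An action is locally finite if every orbit of every finitely generated subgroup
is finite. -/
def LocFinAction (G X : Type*) [Group G] [MulAction G X] : Prop :=
  ∀ H : Subgroup G, H.FG → ∀ x : X, (MulAction.orbit H x).Finite

open Pointwise in
private def konigProj {α : ℕ → Type*} (p : ∀ n, α (n + 1) → α n) :
    {i j : ℕ} → i ≤ j → α j → α i :=
  fun {i j} hij => Nat.leRecOn (C := fun k => α k → α i) hij (fun {k} g => g ∘ p k) id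

private lemma konigProj_self {α : ℕ → Type*} (p : ∀ n, α (n + 1) → α n) {i : ℕ} (h : i ≤ i)
    (a : α i) : konigProj p h a = a :=
  congrFun (Nat.leRecOn_self (C := fun k => α k → α i) (next := fun {k} g => g ∘ p k) id) a

private lemma konigProj_succ {α : ℕ → Type*} (p : ∀ n, α (n + 1) → α n) {i j : ℕ}
    (hij : i ≤ j) (h2 : i ≤ j + 1) (a : α (j + 1)) :
    konigProj p h2 a = konigProj p hij (p j a) :=
  congrFun (Nat.leRecOn_succ (C := fun k => α k → α i) (next := fun {k} g => g ∘ p k) hij id) a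

private lemma konig_steps {α : ℕ → Type*} [∀ n, Finite (α n)] [∀ n, Nonempty (α n)]
    (p : ∀ n, α (n + 1) → α n) : ∃ f : ∀ n, α n, ∀ n, p n (f (n + 1)) = f n := by
  have πtrans : ∀ ⦃i j k : ℕ⦄ (hij : i ≤ j) (hjk : j ≤ k) (a : α k),
      konigProj p hij (konigProj p hjk a) = konigProj p (hij.trans hjk) a := by
    intro i j k hij hjk
    induction k, hjk using Nat.le_induction with
    | base => intro a; rw [konigProj_self]
    | succ k hjk ih =>
      intro a
      rw [konigProj_succ p hjk, konigProj_succ p (hij.trans hjk), ih]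
  obtain ⟨f, hf⟩ := exists_seq_forall_proj_of_forall_finite (konigProj p)
    (fun i a => konigProj_self p _ a) πtrans (fun i a => Set.toFinite _)
  refine ⟨f, fun n => ?_⟩
  have := hf (Nat.le_succ n)
  rwa [konigProj_succ p (le_refl n), konigProj_self] at this

open Pointwise

theorem exists_equidecomp_proper_of_not_locFin {G X : Type*} [Group G] [MulAction G X]
    (h : ¬ LocFinAction G X) :
    ∃ A B : Set X, B ⊂ A ∧ SetEquidecomp G A B := by
  classical
  rw [LocFinAction] at h
  push_neg at h
  obtain ⟨H, hFG, x, hinf⟩ := h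
  obtain ⟨S, hS⟩ := hFG
  set Tset : Set G := ↑S ∪ (↑S)⁻¹ with hTset
  have hTfin : Tset.Finite := S.finite_toSet.union S.finite_toSet.inv
  -- balls
  let B : ℕ → Set X := fun n => Nat.rec {x} (fun _ C => C ∪ ⋃ t ∈ Tset, t • C) n
  have hB0 : B 0 = {x} := rfl
  have hBsucc : ∀ n, B (n + 1) = B n ∪ ⋃ t ∈ Tset, t • B n := fun n => rfl
  have Bfin : ∀ n, (B n).Finite := by
    intro n
    induction n with
    | zero => exact Set.finite_singleton x
    | succ n ih => exact ih.union (Set.Finite.biUnion hTfin fun t _ => ih.smul_set)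
  have Bmono : Monotone B :=
    monotone_nat_of_le_succ fun n => by rw [hBsucc]; exact Set.subset_union_left
  have hstep : ∀ t ∈ Tset, ∀ n, ∀ z ∈ B n, t • z ∈ B (n + 1) := by
    intro t ht n z hz
    rw [hBsucc]
    exact Or.inr (Set.mem_biUnion ht (Set.smul_mem_smul_set hz))
  have orbitB : ∀ y ∈ MulAction.orbit H x, ∃ n, y ∈ B n := by
    rintro y ⟨⟨g, hgH⟩, rfl⟩
    have hg : g ∈ Subgroup.closure (↑S : Set G) := by rw [hS]; exact hgH
    show ∃ n, g • x ∈ B n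
    clear hgH
    clear hinf
    induction hg using Subgroup.closure_induction_left with
    | one => exact ⟨0, by simp [hB0]⟩
    | mul_left t ht z hz ih =>
      obtain ⟨n, hn⟩ := ih
      exact ⟨n + 1, by rw [mul_smul]; exact hstep t (Or.inl ht) n _ hn⟩
    | inv_mul_cancel t ht z hz ih =>
      obtain ⟨n, hn⟩ := ih
      refine ⟨n + 1, by rw [mul_smul]; exact hstep t⁻¹ (Or.inr (by simpa using ht)) n _ hn⟩
  -- spheres
  let Sph : ℕ → Set X := fun n => Nat.casesOn n {x} (fun m => B (m + 1) \ B m)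
  have hSph0 : Sph 0 = {x} := rfl
  have hSphS : ∀ n, Sph (n + 1) = B (n + 1) \ B n := fun _ => rfl
  have SphsubB : ∀ n, Sph n ⊆ B n := by
    intro n
    cases n with
    | zero => rw [hSph0, hB0]
    | succ m => rw [hSphS]; exact Set.diff_subset
  have SphNe : ∀ n, (Sph n).Nonempty := by
    intro n
    cases n with
    | zero => exact ⟨x, rfl⟩
    | succ m =>
      by_contra hne
      rw [Set.not_nonempty_iff_eq_empty, hSphS, Set.diff_eq_empty] at hne
      have hB1 : B (m + 1) = B m := le_antisymm hne (Bmono (Nat.le_succ m))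
      have hconst : ∀ k, B (m + k) = B m := by
        intro k
        induction k with
        | zero => rfl
        | succ k ih =>
          have : m + (k + 1) = (m + k) + 1 := rfl
          rw [this, hBsucc, ih, ← hBsucc, hB1]
      refine hinf ((Bfin m).subset ?_)
      intro y hy
      obtain ⟨n, hn⟩ := orbitB y hy
      rcases le_total n m with hnm | hmn
      · exact Bmono hnm hn
      · obtain ⟨k, rfl⟩ := Nat.exists_eq_add_of_le hmn
        rwa [hconst k] at hn
  have pred : ∀ n, ∀ z ∈ Sph (n + 1), ∃ w ∈ Sph n, ∃ t ∈ Tset, z = t • w := by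
    intro n z hz
    rw [hSphS] at hz
    obtain ⟨hz1, hz2⟩ := hz
    rw [hBsucc] at hz1
    rcases hz1 with hz1 | hz1
    · exact absurd hz1 hz2
    · obtain ⟨t, ht, w, hw, rfl⟩ := by simpa using hz1
      refine ⟨w, ?_, t, ht, rfl⟩
      cases n with
      | zero => rwa [hSph0, ← hB0]
      | succ m =>
        rw [hSphS]
        refine ⟨hw, fun hwm => ?_⟩
        exact hz2 (hstep t ht m w hwm)
  -- the ray via König's lemma
  let α : ℕ → Type _ := fun n => ↥(Sph n)
  have instF : ∀ n, Finite (α n) := fun n => ((Bfin n).subset (SphsubB n)).to_subtype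
  have instN : ∀ n, Nonempty (α n) := fun n => (SphNe n).to_subtype
  have hchoice : ∀ n (z : α (n + 1)), ∃ w : α n, ∃ t, t ∈ Tset ∧ z.1 = t • w.1 := by
    intro n z
    obtain ⟨w, hw, t, ht, hzw⟩ := pred n z z.2
    exact ⟨⟨w, hw⟩, t, ht, hzw⟩
  choose p t0 ht0 heq using hchoice
  obtain ⟨f, hf⟩ := @konig_steps α instF instN p
  let y : ℕ → X := fun n => (f n).1
  have hy : ∀ n, y n ∈ Sph n := fun n => (f n).2
  have hgy : ∀ n, ∃ t ∈ Tset, y (n + 1) = t • y n := by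
    intro n
    refine ⟨t0 n (f (n + 1)), ht0 n (f (n + 1)), ?_⟩
    have h2 := heq n (f (n + 1))
    rw [hf n] at h2
    exact h2
  choose g hgT hgstep using hgy
  -- injectivity
  have key : ∀ a b, a < b → y a ≠ y b := by
    intro a b hab hEq
    obtain ⟨c, rfl⟩ := Nat.exists_eq_add_of_lt hab
    have h1 : y a ∈ B (a + c) := Bmono (Nat.le_add_right a c) (SphsubB a (hy a))
    have h2 : y (a + c + 1) ∉ B (a + c) := ((hSphS (a + c)) ▸ hy (a + c + 1)).2
    exact h2 (hEq ▸ h1)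
  have yinj : Function.Injective y := by
    intro a b hEq
    by_contra hne
    rcases lt_or_gt_of_ne hne with hl | hl
    · exact key a b hl hEq
    · exact key b a hl hEq.symm
  -- enumeration of the generating set
  let TF : Finset G := hTfin.toFinset
  let N : ℕ := TF.card
  let e : {u // u ∈ TF} ≃ Fin N := TF.equivFin
  have hgTF : ∀ k, g k ∈ TF := fun k => hTfin.mem_toFinset.mpr (hgT k)
  let c : ℕ → Fin N := fun k => e ⟨g k, hgTF k⟩
  let t : Fin N → G := fun i => ((e.symm i) : G)
  have htc : ∀ k, t (c k) = g k := by
    intro k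
    show ((e.symm (e ⟨g k, hgTF k⟩)) : G) = g k
    rw [Equiv.symm_apply_apply]
  have hstep2 : ∀ k, y (k + 1) = t (c k) • y k := fun k => by rw [htc]; exact hgstep k
  refine ⟨Set.range y, y '' {k | k ≠ 0}, ?_, N, fun i => y '' {k | c k = i},
    fun i => t i • (y '' {k | c k = i}), t, ?_, ?_, ?_, ?_, fun i => rfl⟩
  · constructor
    · rintro z ⟨k, _, rfl⟩; exact ⟨k, rfl⟩
    · intro hsub
      obtain ⟨k, hk0, hk⟩ := hsub ⟨0, rfl⟩
      exact hk0 (yinj hk)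
  · ext z
    simp only [Set.mem_iUnion, Set.mem_image, Set.mem_range, Set.mem_setOf_eq]
    constructor
    · rintro ⟨i, k, _, rfl⟩; exact ⟨k, rfl⟩
    · rintro ⟨k, rfl⟩; exact ⟨c k, k, rfl, rfl⟩
  · ext z
    simp only [Set.mem_iUnion, Set.mem_image, Set.mem_setOf_eq]
    constructor
    · rintro ⟨i, hz⟩
      rw [Set.mem_smul_set] at hz
      obtain ⟨w, ⟨k, hck, rfl⟩, rfl⟩ := hz
      exact ⟨k + 1, Nat.succ_ne_zero k, by rw [← hck, ← hstep2]⟩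
    · rintro ⟨k, hk0, rfl⟩
      obtain ⟨m, rfl⟩ := Nat.exists_eq_succ_of_ne_zero hk0
      refine ⟨c m, ?_⟩
      rw [Set.mem_smul_set]
      exact ⟨y m, ⟨m, rfl, rfl⟩, (hstep2 m).symm⟩
  · intro i j hij
    rw [Function.onFun, Set.disjoint_left]
    rintro z ⟨k, hk, rfl⟩ ⟨k2, hk2, hkk⟩
    obtain rfl := yinj hkk
    exact hij (hk.symm.trans hk2)
  · intro i j hij
    rw [Function.onFun, Set.disjoint_left]
    rintro z hz1 hz2
    rw [Set.mem_smul_set] at hz1 hz2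
    obtain ⟨w1, ⟨k1, hk1, rfl⟩, rfl⟩ := hz1
    obtain ⟨w2, ⟨k2, hk2, rfl⟩, heq2⟩ := hz2
    have h1 : t i • y k1 = y (k1 + 1) := by rw [← hk1, ← hstep2]
    have h2 : t j • y k2 = y (k2 + 1) := by rw [← hk2, ← hstep2]
    have hk12 : y (k2 + 1) = y (k1 + 1) := by rw [← h1, ← h2, heq2]
    have : k2 = k1 := Nat.succ_injective (yinj hk12)
    subst this
    exact hij (hk1.symm.trans hk2)
end

section
/- Let G act on X, let S ⊆ G be finite, and suppose (s_n)_{n≥1} is a sequence in S such that the points x_n := s_n ⋯ s_1 • x (for n ≥ 1) are pairwise distinct. Then the set γ := {x_n : n ≥ 1} is equidecomposable with its proper subset γ \ {x_1}. -/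
open Pointwise

/-- If  (with ,  finite) are pairwise
distinct points, then  is equidecomposable with its proper subset
. -/
theorem path_equidecomp_with_proper_subset {G X : Type*} [Group G] [MulAction G X]
    (S : Set G) (hS : S.Finite) (f : ℕ → G) (hf : ∀ n, f n ∈ S) (x : X)
    (y : ℕ → X) (hy : ∀ n, y n = (((List.range (n + 1)).reverse.map f).prod) • x)
    (hinj : Function.Injective y) :
    Set.range y \ {y 0} ⊂ Set.range y ∧
      SetEquidecomp G (Set.range y) (Set.range y \ {y 0}) := by
  have hstep : ∀ n, y (n + 1) = f (n + 1) • y n := by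
    intro n
    rw [hy, hy]
    rw [show n + 1 + 1 = (n + 1) + 1 from rfl, List.range_succ (n := n + 1)]
    simp [mul_smul]
  classical
  constructor
  · rw [Set.sdiff_singleton_ssubset]
    exact Set.mem_range_self 0
  · set F := hS.toFinset with hF
    set e : Fin F.card ≃ {g // g ∈ F} := F.equivFin.symm with he
    refine ⟨F.card, fun i => y '' {n | f (n + 1) = (e i : G)},
      fun i => (e i : G) • (y '' {n | f (n + 1) = (e i : G)}),
      fun i => (e i : G), ?_, ?_, ?_, ?_, fun i => rfl⟩
    · ext z
      simp only [Set.mem_iUnion, Set.mem_image, Set.mem_setOf_eq, Set.mem_range]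
      constructor
      · rintro ⟨i, n, _, rfl⟩; exact ⟨n, rfl⟩
      · rintro ⟨n, rfl⟩
        refine ⟨F.equivFin ⟨f (n + 1), by simp [hF, hf]⟩, n, ?_, rfl⟩
        simp [he]
    · ext z
      simp only [Set.mem_iUnion, Set.mem_diff, Set.mem_range, Set.mem_singleton_iff]
      constructor
      · rintro ⟨i, hz⟩
        rw [Set.mem_smul_set] at hz
        obtain ⟨w, ⟨n, hn, rfl⟩, rfl⟩ := hz
        rw [← hn, ← hstep]
        exact ⟨⟨n + 1, rfl⟩, fun h => Nat.succ_ne_zero n (hinj h)⟩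
      · rintro ⟨⟨m, rfl⟩, hm0⟩
        have hm : m ≠ 0 := fun h => hm0 (by rw [h])
        obtain ⟨n, rfl⟩ := Nat.exists_eq_succ_of_ne_zero hm
        refine ⟨F.equivFin ⟨f (n + 1), by simp [hF, hf]⟩, ?_⟩
        rw [Set.mem_smul_set]
        exact ⟨y n, ⟨n, by simp [he], rfl⟩, by simp [he, ← hstep]⟩
    · intro i j hij
      rw [Function.onFun, Set.disjoint_left]
      rintro z ⟨n, hn, rfl⟩ ⟨m, hm, hnm⟩
      have : n = m := hinj hnm.symm
      subst this
      exact hij (e.injective (Subtype.ext (hn ▸ hm ▸ rfl)))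
    · intro i j hij
      rw [Function.onFun, Set.disjoint_left]
      rintro z hz hz'
      rw [Set.mem_smul_set] at hz hz'
      obtain ⟨w, ⟨n, hn, rfl⟩, rfl⟩ := hz
      obtain ⟨w', ⟨m, hm, rfl⟩, heq⟩ := hz'
      rw [← hm, ← hn, ← hstep, ← hstep] at heq
      have : m + 1 = n + 1 := hinj heq
      have : m = n := Nat.succ_injective this
      subst this
      exact hij (e.injective (Subtype.ext (hn ▸ hm ▸ rfl)))
end

section
/- If the action of G on X is locally finite, then no subset of X is equidecomposable with a proper subset of itself. -/
open Pointwise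

/-- Two subsets `A`, `B` of a `G`-set `X` are equidecomposable if there are finite
partitions `{A_i}` of `A` and `{B_i}` of `B` and elements `s_i ∈ G` with `B_i = s_i • A_i`. -/
def Equidecomp' (G : Type*) {X : Type*} [Group G] [MulAction G X] (A B : Set X) : Prop :=
  ∃ (n : ℕ) (As Bs : Fin n → Set X) (s : Fin n → G),
    (⋃ i, As i) = A ∧ (⋃ i, Bs i) = B ∧
    Pairwise (Function.onFun Disjoint As) ∧ Pairwise (Function.onFun Disjoint Bs) ∧
    ∀ i, Bs i = (s i) • As i

theorem not_equidecomp_proper_of_locFin {G X : Type*} [Group G] [MulAction G X]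
    (h : LocFinAction G X) :
    ∀ A B : Set X, B ⊂ A → ¬ Equidecomp' G A B := by
  rintro A B ⟨hBA, hne⟩ ⟨n, As, Bs, s, hA, hB, hdA, hdB, hs⟩
  obtain ⟨a, haA, haB⟩ := Set.not_subset.mp hne
  classical
  set H : Subgroup G := Subgroup.closure (Set.range s) with hH
  have hFG : H.FG := (Subgroup.fg_iff _).mpr ⟨Set.range s, rfl, Set.finite_range s⟩
  have horb : (MulAction.orbit H a).Finite := h H hFG a
  set Y : Set X := MulAction.orbit H a ∩ A with hY
  have hYfin : Y.Finite := horb.inter_of_left A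
  set f : X → X := fun x => if hx : ∃ i, x ∈ As i then s hx.choose • x else x with hf
  have key : ∀ x ∈ A, ∃ i, x ∈ As i ∧ f x = s i • x ∧ f x ∈ Bs i := by
    intro x hx
    rw [← hA] at hx
    obtain ⟨i, hi⟩ := Set.mem_iUnion.mp hx
    have hex : ∃ i, x ∈ As i := ⟨i, hi⟩
    refine ⟨hex.choose, hex.choose_spec, by simp only [hf, dif_pos hex], ?_⟩
    rw [hs hex.choose]
    simp only [hf, dif_pos hex]
    exact Set.smul_mem_smul_set hex.choose_spec
  have hmapsB : ∀ x ∈ A, f x ∈ B := by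
    intro x hx
    obtain ⟨i, _, _, hfx⟩ := key x hx
    rw [← hB]; exact Set.mem_iUnion.mpr ⟨i, hfx⟩
  have hinj : Set.InjOn f A := by
    intro x hx y hy hxy
    obtain ⟨i, hxi, hfx, hfxB⟩ := key x hx
    obtain ⟨j, hyj, hfy, hfyB⟩ := key y hy
    have hij : i = j := by
      by_contra hne'
      exact (hdB hne').le_bot ⟨hfxB, hxy ▸ hfyB⟩
    subst hij
    exact smul_left_cancel (s i) (hfx.symm.trans (hxy.trans hfy))
  have hmaps : Set.MapsTo f Y Y := by
    rintro x ⟨hxo, hxA⟩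
    obtain ⟨i, _, hfx, _⟩ := key x hxA
    refine ⟨?_, hBA (hmapsB x hxA)⟩
    obtain ⟨g, hg⟩ := MulAction.mem_orbit_iff.mp hxo
    have hsi : s i ∈ H := Subgroup.subset_closure (Set.mem_range_self i)
    rw [hfx, ← hg]
    exact ⟨⟨s i, hsi⟩ * g, by simp [mul_smul, Subgroup.smul_def]⟩
  have hbij : Set.BijOn f Y Y :=
    (hYfin.injOn_iff_bijOn_of_mapsTo hmaps).mp (hinj.mono Set.inter_subset_right)
  have haY : a ∈ Y := ⟨MulAction.mem_orbit_self a, haA⟩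
  obtain ⟨x, hxY, hfx⟩ := hbij.surjOn haY
  exact haB (hfx ▸ hmapsB x hxY.2)
end

section
/- An action of a group G on a set X is locally finite if and only if X is not equidecomposable with a proper subset of itself. -/
open Pointwise

section Aux
variable {G X : Type*} [Group G] [MulAction G X]

/-- balls in the Schreier graph -/
def eqBall (T : Finset G) (x : X) : ℕ → Set X
  | 0 => {x}
  | n+1 => eqBall T x n ∪ ⋃ g ∈ T, (g : G) • eqBall T x n

lemma eqBall_finite (T : Finset G) (x : X) : ∀ n, (eqBall T x n).Finite
  | 0 => Set.finite_singleton x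
  | n+1 => by
    refine ((eqBall_finite T x n).union ?_)
    exact T.finite_toSet.biUnion fun g _ => (eqBall_finite T x n).smul_set

lemma eqBall_mono (T : Finset G) (x : X) : Monotone (eqBall T x) := by
  apply monotone_nat_of_le_succ
  intro n
  exact Set.subset_union_left

/-- distance from x -/
noncomputable def eqD (T : Finset G) (x : X) (y : X) : ℕ := sInf {n | y ∈ eqBall T x n}

def eqStep (T : Finset G) (x : X) (v w : X) : Prop :=
  (∃ g ∈ T, w = g • v) ∧ eqD T x w = eqD T x v + 1

def eqR (T : Finset G) (x : X) (v : X) : Set X :=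
  {y | Relation.ReflTransGen (eqStep T x) v y}

lemma eqD_le (T : Finset G) (x : X) {y : X} {n : ℕ} (h : y ∈ eqBall T x n) :
    eqD T x y ≤ n := Nat.sInf_le h

lemma mem_eqBall_eqD (T : Finset G) (x : X) {y : X} (h : ∃ n, y ∈ eqBall T x n) :
    y ∈ eqBall T x (eqD T x y) := Nat.sInf_mem h

lemma reach (T : Finset G) (x : X) : ∀ m (y : X), eqD T x y = m → (∃ n, y ∈ eqBall T x n) →
    Relation.ReflTransGen (eqStep T x) x y := by
  intro m
  induction m using Nat.strong_induction_on with
  | _ m ih =>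
    intro y hd hy
    have hby := mem_eqBall_eqD T x hy
    rw [hd] at hby
    match m, hd with
    | 0, hd => 
      simp only [eqBall] at hby
      rw [hby]
    | (k+1), hd =>
      have hnk : y ∉ eqBall T x k := fun h => by
        have := eqD_le T x h; omega
      rcases hby with h | h
      · exact absurd h hnk
      · simp only [Set.mem_iUnion] at h
        obtain ⟨g, hg, hmem⟩ := h
        rw [Set.mem_smul_set] at hmem
        obtain ⟨w, hw, hgw⟩ := hmem
        rw [eq_comm] at hgw
        -- y = g • w, w ∈ ball k
        have hdw : eqD T x w ≤ k := eqD_le T x hw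
        have hyb : y ∈ eqBall T x (eqD T x w + 1) := by
          refine Or.inr ?_
          simp only [Set.mem_iUnion]
          exact ⟨g, hg, w, mem_eqBall_eqD T x ⟨k, hw⟩, hgw.symm⟩
        have hdy : eqD T x y ≤ eqD T x w + 1 := eqD_le T x hyb
        have hdw' : eqD T x w = k := by omega
        have hstep : eqStep T x w y := ⟨⟨g, hg, hgw⟩, by omega⟩
        exact (ih k (by omega) w hdw' ⟨k, hw⟩).tail hstep

lemma eqR_infinite_step (T : Finset G) (x : X) {v : X} (hv : (eqR T x v).Infinite) :
    ∃ w, eqStep T x v w ∧ (eqR T x w).Infinite := by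
  by_contra hcon
  push_neg at hcon
  have hsub : eqR T x v ⊆ {v} ∪ ⋃ g ∈ T, ⋃ (_ : eqStep T x v ((g:G) • v)), eqR T x (g • v) := by
    intro y hy
    rcases Relation.ReflTransGen.cases_head hy with h | ⟨c, hc, hcy⟩
    · exact Or.inl (by simp [h.symm])
    · obtain ⟨g, hg, hgc⟩ := hc.1
      subst hgc
      refine Or.inr ?_
      simp only [Set.mem_iUnion]
      exact ⟨g, hg, hc, hcy⟩
  refine hv (Set.Finite.subset ((Set.finite_singleton v).union ?_) hsub)
  refine T.finite_toSet.biUnion fun g hg => ?_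
  by_cases h : eqStep T x v ((g:G) • v)
  · simpa [h] using hcon _ h
  · simp [h]

end Aux

section Aux2
variable {G X : Type*} [Group G] [MulAction G X]

lemma smul_mem_eqBall {T : Finset G} {x y : X} {g : G} (hg : g ∈ T) {n : ℕ}
    (hy : y ∈ eqBall T x n) : g • y ∈ eqBall T x (n + 1) := by
  refine Or.inr ?_
  simp only [Set.mem_iUnion]
  exact ⟨g, hg, Set.smul_mem_smul_set hy⟩

lemma exists_ray (T : Finset G) (x : X) (hx : (eqR T x x).Infinite) :
    ∃ v : ℕ → X, v 0 = x ∧ ∀ n, eqStep T x (v n) (v (n + 1)) := by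
  have key : ∀ p : {v : X // (eqR T x v).Infinite},
      ∃ q : {v : X // (eqR T x v).Infinite}, eqStep T x p.1 q.1 := fun p => by
    obtain ⟨w, hw, hwi⟩ := eqR_infinite_step T x p.2
    exact ⟨⟨w, hwi⟩, hw⟩
  choose next hnext using key
  refine ⟨fun n => (next^[n] ⟨x, hx⟩ : {v : X // (eqR T x v).Infinite}).1, rfl, fun n => ?_⟩
  simp only [Function.iterate_succ_apply']
  exact hnext _

lemma orbit_mem_ball [DecidableEq G] (S : Finset G) (x : X) (h : G)
    (hh : h ∈ Subgroup.closure (S : Set G)) :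
    ∃ n, h • x ∈ eqBall (S ∪ S.image (·⁻¹)) x n := by
  induction hh using Subgroup.closure_induction_left with
  | one => exact ⟨0, by simp [eqBall, one_smul]⟩
  | mul_left g hg y hy ih =>
    obtain ⟨n, hn⟩ := ih
    refine ⟨n + 1, ?_⟩
    rw [mul_smul]
    exact smul_mem_eqBall (Finset.mem_union_left _ hg) hn
  | inv_mul_cancel g hg y hy ih =>
    obtain ⟨n, hn⟩ := ih
    refine ⟨n + 1, ?_⟩
    rw [mul_smul]
    refine smul_mem_eqBall (Finset.mem_union_right _ ?_) hn
    exact Finset.mem_image_of_mem _ hg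

end Aux2
section Aux3
variable {G X : Type*} [Group G] [MulAction G X]

lemma dir2 [DecidableEq G] (S : Finset G) (x : X)
    (hinf : (MulAction.orbit (Subgroup.closure (S : Set G)) x).Infinite) :
    ∃ B : Set X, B ⊂ Set.univ ∧ Equidecomp' G Set.univ B := by
  set T : Finset G := S ∪ S.image (·⁻¹) with hT
  have hsub : MulAction.orbit (Subgroup.closure (S : Set G)) x ⊆ eqR T x x := by
    rintro y ⟨h, rfl⟩
    obtain ⟨n, hn⟩ := orbit_mem_ball S x h.1 h.2
    exact reach T x (eqD T x (h.1 • x)) (h.1 • x) rfl ⟨n, hn⟩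
  have hRx : (eqR T x x).Infinite := hinf.mono hsub
  obtain ⟨v, hv0, hstep⟩ := exists_ray T x hRx
  have hD : ∀ n, eqD T x (v n) = n := by
    intro n; induction n with
    | zero =>
      rw [hv0]
      exact Nat.le_antisymm (eqD_le T x (by simp [eqBall])) (Nat.zero_le _)
    | succ k ih => rw [(hstep k).2, ih]
  have hinj : Function.Injective v := fun a b hab => by
    have h1 := hD a; rw [hab, hD b] at h1; omega
  choose g hgT hgv using fun n => (hstep n).1
  set e := T.equivFin with he
  set idx : ℕ → Fin T.card := fun n => e ⟨g n, hgT n⟩ with hidx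
  have hsymm : ∀ n, (e.symm (idx n) : G) = g n := fun n => by rw [hidx]; simp
  set As : Fin (T.card + 1) → Set X :=
    Fin.lastCases (Set.range v)ᶜ (fun i => {y | ∃ m, idx m = i ∧ v m = y}) with hAs
  set sf : Fin (T.card + 1) → G := Fin.lastCases 1 (fun i => (e.symm i : G)) with hsf
  set Bs : Fin (T.card + 1) → Set X := fun i => sf i • As i with hBs
  have hAl : As (Fin.last _) = (Set.range v)ᶜ := by simp [hAs]
  have hAc : ∀ i : Fin T.card, As i.castSucc = {y | ∃ m, idx m = i ∧ v m = y} := fun i => by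
    simp [hAs]
  have hsl : sf (Fin.last _) = 1 := by simp [hsf]
  have hsc : ∀ i : Fin T.card, sf i.castSucc = (e.symm i : G) := fun i => by simp [hsf]
  have hBl : Bs (Fin.last _) = (Set.range v)ᶜ := by
    rw [hBs]; simp only []; rw [hsl, hAl, one_smul]
  have hBc : ∀ i : Fin T.card, Bs i.castSucc = {y | ∃ m, idx m = i ∧ v (m + 1) = y} := by
    intro i
    rw [hBs]; simp only []; rw [hsc, hAc]
    ext y
    simp only [Set.mem_smul_set, Set.mem_setOf_eq]
    constructor
    · rintro ⟨z, ⟨m, him, rfl⟩, rfl⟩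
      refine ⟨m, him, ?_⟩
      rw [← him, hsymm, ← hgv]
    · rintro ⟨m, him, rfl⟩
      refine ⟨v m, ⟨m, him, rfl⟩, ?_⟩
      rw [← him, hsymm, ← hgv]
  refine ⟨{x}ᶜ, ?_, T.card + 1, As, Bs, sf, ?_, ?_, ?_, ?_, fun i => rfl⟩
  · rw [Set.ssubset_univ_iff]
    intro h
    exact (Set.eq_univ_iff_forall.mp h x) rfl
  · apply Set.eq_univ_of_forall
    intro y
    rcases em (y ∈ Set.range v) with ⟨m, rfl⟩ | hy
    · exact Set.mem_iUnion.2 ⟨(idx m).castSucc, by rw [hAc]; exact ⟨m, rfl, rfl⟩⟩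
    · exact Set.mem_iUnion.2 ⟨Fin.last _, by rw [hAl]; exact hy⟩
  · ext y
    simp only [Set.mem_iUnion, Set.mem_compl_iff, Set.mem_singleton_iff]
    constructor
    · rintro ⟨i, hi⟩
      induction i using Fin.lastCases with
      | last =>
        rw [hBl] at hi
        intro h; subst h
        exact hi ⟨0, hv0⟩
      | cast i =>
        rw [hBc] at hi
        obtain ⟨m, -, rfl⟩ := hi
        intro h
        have := hinj (h.trans hv0.symm)
        omega
    · intro hy
      rcases em (y ∈ Set.range v) with ⟨m, rfl⟩ | h
      · cases m with
        | zero => exact absurd hv0 hy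
        | succ k => exact ⟨(idx k).castSucc, by rw [hBc]; exact ⟨k, rfl, rfl⟩⟩
      · exact ⟨Fin.last _, by rw [hBl]; exact h⟩
  · intro i j hne
    simp only [Function.onFun]
    rw [Set.disjoint_left]
    intro y hyi hyj
    induction i using Fin.lastCases with
    | last =>
      induction j using Fin.lastCases with
      | last => exact hne rfl
      | cast j =>
        rw [hAl] at hyi; rw [hAc] at hyj
        obtain ⟨m, -, rfl⟩ := hyj
        exact hyi ⟨m, rfl⟩
    | cast i =>
      induction j using Fin.lastCases with
      | last =>
        rw [hAl] at hyj; rw [hAc] at hyi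
        obtain ⟨m, -, rfl⟩ := hyi
        exact hyj ⟨m, rfl⟩
      | cast j =>
        rw [hAc] at hyi hyj
        obtain ⟨m, him, rfl⟩ := hyi
        obtain ⟨m', him', he'⟩ := hyj
        have : m' = m := hinj he'
        subst this
        exact hne (by rw [← him, ← him'])
  · intro i j hne
    simp only [Function.onFun]
    rw [Set.disjoint_left]
    intro y hyi hyj
    induction i using Fin.lastCases with
    | last =>
      induction j using Fin.lastCases with
      | last => exact hne rfl
      | cast j =>
        rw [hBl] at hyi; rw [hBc] at hyj
        obtain ⟨m, -, rfl⟩ := hyj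
        exact hyi ⟨m + 1, rfl⟩
    | cast i =>
      induction j using Fin.lastCases with
      | last =>
        rw [hBl] at hyj; rw [hBc] at hyi
        obtain ⟨m, -, rfl⟩ := hyi
        exact hyj ⟨m + 1, rfl⟩
      | cast j =>
        rw [hBc] at hyi hyj
        obtain ⟨m, him, rfl⟩ := hyi
        obtain ⟨m', him', he'⟩ := hyj
        have h2 : m' = m := by have := hinj he'; omega
        subst h2
        exact hne (by rw [← him, ← him'])

end Aux3
section Aux4
variable {G X : Type*} [Group G] [MulAction G X]

lemma dir1 (hLF : LocFinAction G X) (B : Set X) (hB : B ⊂ Set.univ)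
    (hE : Equidecomp' G Set.univ B) : False := by
  obtain ⟨n, As, Bs, s, hAu, hBu, hdA, hdB, hs⟩ := hE
  have hcov : ∀ y : X, ∃ i, y ∈ As i := fun y => Set.mem_iUnion.1 (hAu ▸ Set.mem_univ y)
  choose c hc using hcov
  set f : X → X := fun y => s (c y) • y with hf
  set H := Subgroup.closure (Set.range s) with hH
  have hFG : H.FG := (Subgroup.fg_iff H).2 ⟨Set.range s, rfl, Set.finite_range s⟩
  obtain ⟨z, -, hzB⟩ := Set.exists_of_ssubset hB
  set O := MulAction.orbit H z with hO
  have hOfin : O.Finite := hLF H hFG z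
  have hmemH : ∀ y : X, s (c y) ∈ H := fun y => Subgroup.subset_closure ⟨c y, rfl⟩
  have hOsmul : ∀ (a : G), a ∈ H → ∀ y ∈ O, a • y ∈ O := by
    rintro a ha y ⟨h, rfl⟩
    refine ⟨⟨a, ha⟩ * h, ?_⟩
    simp only [Subgroup.smul_def, Subgroup.coe_mul, mul_smul]
  have hmaps : Set.MapsTo f O O := fun y hy => hOsmul (s (c y)) (hmemH y) y hy
  have hmemB : ∀ y : X, f y ∈ Bs (c y) := fun y => by
    rw [hs]; exact Set.smul_mem_smul_set (hc y)
  have hinj : Function.Injective f := by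
    intro a b hab
    have hca : c a = c b := by
      by_contra hne
      have hd := hdB hne
      rw [Function.onFun, Set.disjoint_left] at hd
      exact hd (hmemB a) (hab ▸ hmemB b)
    rw [hf] at hab
    simp only [hca] at hab
    exact smul_left_cancel _ hab
  have hbij : Set.BijOn f O O := (hOfin.injOn_iff_bijOn_of_mapsTo hmaps).1 hinj.injOn
  obtain ⟨w, -, hw⟩ := hbij.surjOn (MulAction.mem_orbit_self z)
  apply hzB
  rw [← hBu]
  rw [← hw]
  exact Set.mem_iUnion.2 ⟨c w, hmemB w⟩

end Aux4

theorem locFin_iff_not_equidecomp_proper {G X : Type*} [Group G] [MulAction G X] :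
    LocFinAction G X ↔ ¬ ∃ B : Set X, B ⊂ Set.univ ∧ Equidecomp' G Set.univ B := by
  constructor
  · rintro hLF ⟨B, hB, hE⟩
    exact dir1 hLF B hB hE
  · intro hne
    by_contra hLF
    apply hne
    simp only [LocFinAction, not_forall] at hLF
    obtain ⟨H, hFG, x, hx⟩ := hLF
    obtain ⟨S, hScl, hSfin⟩ := (Subgroup.fg_iff H).1 hFG
    haveI := Classical.decEq G
    apply dir2 hSfin.toFinset x
    rw [Set.Finite.coe_toFinset, hScl]
    exact hx
end

section
/- A group G is locally finite if and only if G (with the left multiplication action on itself) is not equidecomposable with a proper subset of itself. -/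
open Pointwise

/-- Helper: an injective piecewise-translation map gives an equidecomposition of
`univ` with its range. -/
lemma equidecomp_univ_range {G : Type*} [Group G] {n : ℕ} (s : Fin n → G) (f : G → G)
    (hf : Function.Injective f) (h : ∀ x, ∃ i, f x = s i * x) :
    Equidecomp' G Set.univ (Set.range f) := by
  classical
  set c : G → Fin n := fun x => (h x).choose with hc_def
  have hc : ∀ x, f x = s (c x) * x := fun x => (h x).choose_spec
  refine ⟨n, fun i => {x | c x = i}, fun i => s i • {x | c x = i}, s, ?_, ?_, ?_, ?_, fun i => rfl⟩
  · ext x; simp only [Set.mem_iUnion, Set.mem_setOf_eq, Set.mem_univ, iff_true]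
    exact ⟨c x, rfl⟩
  · have himg : ∀ i, s i • {x | c x = i} = f '' {x | c x = i} := by
      intro i
      ext y
      constructor
      · rintro ⟨x, hx, rfl⟩
        exact ⟨x, hx, by rw [hc x, hx]; rfl⟩
      · rintro ⟨x, hx, rfl⟩
        exact ⟨x, hx, by rw [hc x, hx]; rfl⟩
    simp only [himg]
    rw [← Set.image_iUnion]
    have : (⋃ i, {x | c x = i}) = Set.univ := by
      ext x; simp only [Set.mem_iUnion, Set.mem_setOf_eq, Set.mem_univ, iff_true]
      exact ⟨c x, rfl⟩
    rw [this, Set.image_univ]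
  · intro i j hij
    simp only [Function.onFun, Set.disjoint_left, Set.mem_setOf_eq]
    rintro x rfl h2
    exact hij h2
  · intro i j hij
    simp only [Function.onFun, Set.disjoint_left]
    rintro y ⟨x, hx, rfl⟩ ⟨x', hx', he⟩
    simp only [Set.mem_setOf_eq] at hx hx'
    have hxy : f x' = f x := by
      rw [hc x', hx', hc x, hx]
      simpa [smul_eq_mul] using he
    obtain rfl := hf hxy
    exact hij (hx.symm.trans hx')

theorem locallyFiniteGroup_iff_not_equidecomp_proper {G : Type*} [Group G] :
    (∀ H : Subgroup G, H.FG → Finite H) ↔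
      ¬ ∃ B : Set G, B ⊂ Set.univ ∧ Equidecomp' G Set.univ B := by
  classical
  constructor
  · -- locally finite → no equidecomposition with proper subset
    rintro hloc ⟨B, hBss, n, As, Bs, s, hA, hB, hdA, hdB, hBsEq⟩
    have hx : ∀ x : G, ∃ i, x ∈ As i := by
      intro x
      have : x ∈ ⋃ i, As i := by rw [hA]; trivial
      exact Set.mem_iUnion.mp this
    set c : G → Fin n := fun x => (hx x).choose with hc_def
    have hc : ∀ x, x ∈ As (c x) := fun x => (hx x).choose_spec
    set f : G → G := fun x => s (c x) * x with hf_def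
    have hfB : ∀ x, f x ∈ Bs (c x) := by
      intro x
      rw [hBsEq (c x)]
      exact ⟨x, hc x, rfl⟩
    have hfinj : Function.Injective f := by
      intro x y hxy
      have hcc : c x = c y := by
        by_contra hne
        exact Set.disjoint_left.mp (hdB hne) (hfB x) (hxy ▸ hfB y)
      have : s (c x) * x = s (c x) * y := by
        have := hxy
        simp only [hf_def] at this
        rwa [hcc] at this ⊢
      exact mul_left_cancel this
    set H : Subgroup G := Subgroup.closure (Set.range s) with hH_def
    have hFG : H.FG := ⟨(Set.finite_range s).toFinset, by
      rw [Set.Finite.coe_toFinset]⟩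
    haveI : Finite H := hloc H hFG
    obtain ⟨x₀, hx₀⟩ := (Set.ne_univ_iff_exists_notMem B).mp hBss.ne
    set O : Set G := MulAction.orbit H x₀ with hO_def
    have hOfin : O.Finite := Set.finite_range _
    have hsH : ∀ x, s (c x) ∈ H := fun x => Subgroup.subset_closure ⟨c x, rfl⟩
    have hmaps : Set.MapsTo f O O := by
      rintro y ⟨g, rfl⟩
      exact ⟨⟨s (c (g • x₀)), hsH _⟩ * g, by
        simp [mul_smul, hf_def, smul_eq_mul, Subgroup.smul_def]⟩
    have hbij : Set.BijOn f O O :=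
      (hOfin.injOn_iff_bijOn_of_mapsTo hmaps).mp (hfinj.injOn)
    have hx₀O : x₀ ∈ O := MulAction.mem_orbit_self x₀
    obtain ⟨y, _, hy⟩ := hbij.surjOn hx₀O
    apply hx₀
    have : f y ∈ B := by
      rw [← hB]
      exact Set.mem_iUnion.mpr ⟨c y, hfB y⟩
    rwa [hy] at this
  · -- no equidecomposition → locally finite
    intro hne H hFG
    by_contra hinf
    rw [not_finite_iff_infinite] at hinf
    apply hne
    obtain ⟨T, hT⟩ := hFG
    set S : Finset G := (T ∪ T⁻¹) ∪ {1} with hS_def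
    have h1S : (1 : G) ∈ S := by simp [hS_def]
    have hTS : (T : Set G) ⊆ (S : Set G) := by
      intro x hx; simp [hS_def]; tauto
    -- key: for finite nonempty K, S * K ≠ K
    have hkey : ∀ K : Finset G, K.Nonempty → S * K ≠ K := by
      rintro K ⟨k₀, hk₀⟩ heq
      -- every element of closure S maps K into K
      have hstep : ∀ g ∈ Subgroup.closure (S : Set G), ∀ y ∈ K, g * y ∈ K := by
        intro g hg
        induction hg using Subgroup.closure_induction with
        | mem s hs => intro y hy; rw [← heq]; exact Finset.mul_mem_mul hs hy
        | one => intro y hy; rwa [one_mul]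
        | mul a b _ _ ha hb => intro y hy; rw [mul_assoc]; exact ha _ (hb _ hy)
        | inv a ha hmem =>
          intro y hy
          -- a * · maps K into K injectively, K finite, hence surjectively
          have hmapsTo : Set.MapsTo (fun z => a * z) (K : Set G) (K : Set G) := by
            intro z hz; exact hmem z hz
          have hbij := (K.finite_toSet.injOn_iff_bijOn_of_mapsTo hmapsTo).mp
            ((mul_right_injective a).injOn)
          obtain ⟨z, hz, hz2⟩ := hbij.surjOn hy
          have hz3 : z = a⁻¹ * y := eq_inv_mul_iff_mul_eq.mpr hz2
          rwa [← hz3]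
      -- then H maps k₀ into K, contradicting H infinite
      have hHK : ∀ g ∈ H, g * k₀ ∈ K := by
        intro g hg
        apply hstep
        · exact Subgroup.closure_mono hTS (hT ▸ hg : g ∈ Subgroup.closure (T : Set G))
        · exact hk₀
      have : Function.Injective (fun h : H => (⟨(h : G) * k₀, hHK h h.2⟩ : K)) := by
        intro a b hab
        simp only [Subtype.mk.injEq, mul_left_inj] at hab
        exact Subtype.ext hab
      exact (Finite.of_injective _ this).not_infinite hinf
    -- Hall's condition for t x = (S.image (· * x)).erase 1
    set t : G → Finset G := fun x => (S.image (· * x)).erase 1 with ht_def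
    have hall : ∀ K : Finset G, K.card ≤ (K.biUnion t).card := by
      intro K
      rcases K.eq_empty_or_nonempty with rfl | hK
      · simp
      have hbU : K.biUnion t = (S * K).erase 1 := by
        ext y
        simp only [ht_def, Finset.mem_biUnion, Finset.mem_erase, Finset.mem_image,
          Finset.mem_mul]
        constructor
        · rintro ⟨k, hk, hy1, g, hg, rfl⟩
          exact ⟨hy1, g, hg, k, hk, rfl⟩
        · rintro ⟨hy1, g, hg, k, hk, rfl⟩
          exact ⟨k, hk, hy1, g, hg, rfl⟩
      rw [hbU]
      have hsub : K ⊆ S * K := by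
        intro k hk
        simpa using Finset.mul_mem_mul h1S hk
      have hlt : K.card < (S * K).card :=
        Finset.card_lt_card (lt_of_le_of_ne hsub (fun h => hkey K hK h.symm))
      calc K.card ≤ (S * K).card - 1 := Nat.le_sub_one_of_lt hlt
        _ ≤ ((S * K).erase 1).card := Finset.pred_card_le_card_erase
    obtain ⟨f, hfinj, hft⟩ := (Finset.all_card_le_biUnion_card_iff_exists_injective t).mp hall
    have hfne1 : ∀ x, f x ≠ 1 := fun x => (Finset.mem_erase.mp (hft x)).1
    have hfS : ∀ x, ∃ g ∈ S, g * x = f x := by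
      intro x
      have := (Finset.mem_erase.mp (hft x)).2
      simpa using (Finset.mem_image.mp (by simpa using this))
    -- enumerate S
    set n := Fintype.card ↥S with hn_def
    set e : Fin n ≃ ↥S := (Fintype.equivFin ↥S).symm with he_def
    have hex : ∀ x, ∃ i : Fin n, f x = (↑(e i) : G) * x := by
      intro x
      obtain ⟨g, hg, hgx⟩ := hfS x
      exact ⟨e.symm ⟨g, hg⟩, by simp [hgx]⟩
    refine ⟨Set.range f, ?_, equidecomp_univ_range _ f hfinj hex⟩
    rw [Set.ssubset_univ_iff]
    intro hcontra
    have : (1 : G) ∈ Set.range f := hcontra ▸ trivial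
    obtain ⟨x, hx⟩ := this
    exact hfne1 x hx
end

section
/- Let G act on X in a locally finite way. If for every x ∈ X the stabilizer subgroup G_x is locally finite, then G is locally finite. -/
open Pointwise

theorem locallyFinite_of_locFinAction_of_locallyFinite_stabilizers
    {G X : Type*} [Group G] [MulAction G X] [Nonempty X]
    (h : LocFinAction G X)
    (hstab : ∀ x : X, ∀ K : Subgroup (MulAction.stabilizer G x), K.FG → Finite K) :
    ∀ H : Subgroup G, H.FG → Finite H := by
  intro H hH
  obtain ⟨x⟩ := ‹Nonempty X›
  have horb := h H hH x
  haveI : Group.FG H := (Group.fg_iff_subgroup_fg H).mpr hH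
  set S := MulAction.stabilizer H x with hS
  haveI := horb.to_subtype
  haveI : Finite (H ⧸ S) :=
    Finite.of_equiv _ (MulAction.orbitEquivQuotientStabilizer H x)
  haveI : S.FiniteIndex := Subgroup.finiteIndex_of_finite_quotient
  haveI : Group.FG S := Subgroup.fg_of_index_ne_zero S
  let f : S →* MulAction.stabilizer G x :=
    { toFun := fun s => ⟨((s : H) : G), by
        exact s.2⟩
      map_one' := rfl
      map_mul' := fun a b => rfl }
  have hf : Function.Injective f := by
    intro a b hab
    have h1 : ((a : H) : G) = ((b : H) : G) := congrArg (fun z => z.1) hab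
    exact Subtype.ext (Subtype.ext h1)
  have hK : (f.range).FG := by
    have : Group.FG f.range := Group.fg_range f
    exact (Group.fg_iff_subgroup_fg _).mp this
  haveI : Finite f.range := hstab x f.range hK
  haveI : Finite S := Finite.of_injective (fun s => (⟨f s, s, rfl⟩ : f.range)) (by
    intro a b hab
    exact hf (Subtype.ext_iff.mp hab))
  exact Finite.of_equiv _ (Subgroup.groupEquivQuotientProdSubgroup (s := S)).symm
end

section
/- A finitely generated group admits a faithful locally finite action on some set if and only if it is residually finite. -/
open scoped Pointwise

lemma countable_of_group_fg {G : Type*} [Group G] (hfg : Group.FG G) : Countable G := by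
  obtain ⟨T, hT⟩ := hfg.out
  set S : Set G := ↑T ∪ (↑T)⁻¹ with hS
  have hfin : S.Finite := T.finite_toSet.union T.finite_toSet.inv
  haveI : Finite ↥S := hfin.to_subtype
  have hsurj : Function.Surjective (fun l : List ↥S => (l.map Subtype.val).prod) := by
    intro g
    have hg : g ∈ Submonoid.closure S := by
      rw [hS, ← Subgroup.closure_toSubmonoid, Subgroup.mem_toSubmonoid, hT]
      trivial
    obtain ⟨l, hl, hprod⟩ := Submonoid.exists_list_of_mem_closure hg
    refine ⟨l.attach.map fun y => (⟨y.1, hl y.1 y.2⟩ : ↥S), ?_⟩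
    simpa [List.map_map, Function.comp_def] using hprod
  exact hsurj.countable

theorem fg_admits_faithful_locFin_iff_residuallyFinite
    {G : Type*} [Group G] (hfg : Group.FG G) :
    (∃ (X : Type) (phi : G →* Equiv.Perm X),
        Function.Injective phi ∧
        ∀ H : Subgroup G, H.FG → ∀ x : X,
          Set.Finite {y : X | ∃ h ∈ H, phi h x = y}) ↔
      (∀ g : G, g ≠ 1 → ∃ (F : Type) (_ : Group F) (_ : Finite F)
        (psi : G →* F), psi g ≠ 1) := by
  constructor
  · rintro ⟨X, phi, hinj, hlf⟩ g hg
    -- faithfulness gives a point moved by g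
    have hne : phi g ≠ 1 := fun h => hg (hinj (h.trans (map_one phi).symm))
    obtain ⟨x, hx⟩ : ∃ x, phi g x ≠ x := by
      by_contra h
      push_neg at h
      exact hne (Equiv.ext fun x => (h x).trans (Equiv.Perm.one_apply x).symm)
    set O : Set X := {y : X | ∃ h ∈ (⊤ : Subgroup G), phi h x = y} with hO
    have hOfin : O.Finite := hlf ⊤ hfg.out x
    have hmem : ∀ (a : G) (y : X), y ∈ O → phi a y ∈ O := by
      rintro a y ⟨h, -, rfl⟩
      refine ⟨a * h, trivial, ?_⟩
      rw [map_mul]; rfl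
    have hpres : ∀ (a : G) (y : X), y ∈ O ↔ phi a y ∈ O := by
      intro a y
      refine ⟨hmem a y, fun hy => ?_⟩
      have := hmem a⁻¹ _ hy
      simpa using this
    haveI : Finite ↥O := hOfin.to_subtype
    refine ⟨Equiv.Perm ↥O, inferInstance, inferInstance,
      { toFun := fun a => (phi a).subtypePerm (fun y => (hpres a y).symm)
        map_one' := by ext y; simp
        map_mul' := by intro a b; ext y; show phi (a * b) y = phi a (phi b y); rw [map_mul]; rfl }, ?_⟩
    intro h
    have hxO : x ∈ O := ⟨1, trivial, by simp⟩
    have := congrArg (fun e : Equiv.Perm ↥O => (e ⟨x, hxO⟩ : X)) h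
    simp [Equiv.Perm.subtypePerm_apply] at this
    exact hx this
  · intro hres
    haveI : Countable G := countable_of_group_fg hfg
    by_cases htriv : ∀ g : G, g = 1
    · refine ⟨PUnit, 1, ?_, ?_⟩
      · intro a b _
        rw [htriv a, htriv b]
      · intro H _ x
        exact (Set.finite_univ (α := PUnit)).subset (Set.subset_univ _)
    · push_neg at htriv
      set S := {g : G // g ≠ 1} with hSdef
      haveI : Nonempty S := ⟨⟨htriv.choose, htriv.choose_spec⟩⟩
      obtain ⟨f, hf⟩ := exists_surjective_nat S
      have key : ∀ s : S, ∃ (F : Type) (_ : Finite F) (rho : G →* Equiv.Perm F),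
          rho s.1 ≠ 1 := by
        intro s
        obtain ⟨F, hG, hF, psi, hne⟩ := hres s.1 s.2
        refine ⟨F, hF, (MulAction.toPermHom F F).comp psi, fun h => hne ?_⟩
        have := congrArg (fun e : Equiv.Perm F => e 1) h
        simpa using this
      choose F hFin rho hrho using key
      refine ⟨(n : ℕ) × F (f n),
        { toFun := fun g => Equiv.sigmaCongrRight fun n => rho (f n) g
          map_one' := Equiv.ext fun ⟨n, y⟩ => by simp only [Equiv.sigmaCongrRight_apply, map_one, Equiv.Perm.one_apply]
          map_mul' := by intro a b; exact Equiv.ext fun ⟨n, y⟩ => by simp only [Equiv.Perm.mul_apply, Equiv.sigmaCongrRight_apply, map_mul] }, ?_, ?_⟩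
      · rw [injective_iff_map_eq_one]
        intro a ha
        by_contra hne
        obtain ⟨n, hn⟩ := hf ⟨a, hne⟩
        have hr : rho (f n) a = 1 := by
          refine Equiv.ext fun y => ?_
          have h1 := congrArg
            (fun e : Equiv.Perm ((m : ℕ) × F (f m)) => e ⟨n, y⟩) ha
          simp only [Equiv.sigmaCongrRight_apply, Equiv.Perm.one_apply,
            MonoidHom.coe_mk, OneHom.coe_mk] at h1
          exact eq_of_heq (Sigma.mk.inj_iff.mp h1).2
        rw [hn] at hr
        exact hrho ⟨a, hne⟩ hr
      · intro H _ x
        obtain ⟨n, y⟩ := x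
        haveI := hFin (f n)
        refine (Set.finite_range
          (fun z : F (f n) => (⟨n, z⟩ : (m : ℕ) × F (f m)))).subset ?_
        rintro z ⟨h, -, rfl⟩
        exact ⟨rho (f n) h y, rfl⟩
end

section
/- If a group G admits a faithful locally finite action on a set, then G embeds into a group which admits a faithful, locally finite, and transitive action on a set. -/
open Equiv Set Pointwise

/-- The subgroup of finitely supported permutations of `X`. -/
def finitaryPerms (X : Type*) : Subgroup (Equiv.Perm X) where
  carrier := {σ | {x | σ x ≠ x}.Finite}
  one_mem' := by simp
  mul_mem' := by
    intro a b ha hb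
    apply (Set.Finite.union ha hb).subset
    intro x hx
    simp only [Set.mem_setOf_eq, Equiv.Perm.mul_apply] at hx
    by_contra hc
    simp only [Set.mem_union, Set.mem_setOf_eq, not_or, not_not] at hc
    rw [hc.2, hc.1] at hx
    exact hx rfl
  inv_mem' := by
    intro a ha
    have key : {x | a⁻¹ x ≠ x} = {x | a x ≠ x} := by
      ext x
      simp only [Set.mem_setOf_eq, ne_eq]
      constructor
      · intro hx hax
        apply hx
        nth_rewrite 1 [← hax]
        exact a.symm_apply_apply x
      · intro hx hax
        apply hx
        have := congrArg a hax
        simpa using this.symm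
    show {x | a⁻¹ x ≠ x}.Finite
    exact key ▸ ha

lemma mem_finitaryPerms {X : Type*} (σ : Equiv.Perm X) :
    σ ∈ finitaryPerms X ↔ {x | σ x ≠ x}.Finite := Iff.rfl

lemma finitaryPerms_normal (X : Type*) : (finitaryPerms X).Normal := by
  constructor
  intro σ hσ τ
  rw [mem_finitaryPerms] at hσ ⊢
  apply (hσ.image τ).subset
  intro x hx
  simp only [Set.mem_setOf_eq, Equiv.Perm.mul_apply] at hx
  refine ⟨τ⁻¹ x, ?_, by simp⟩
  simp only [Set.mem_setOf_eq]
  intro hfix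
  rw [hfix] at hx
  simp at hx

/-- The subgroup of `Perm X` of permutations which are a `phi g` times a finitary
permutation. -/
def bigGroup {G : Type*} [Group G] {X : Type} (phi : G →* Equiv.Perm X) :
    Subgroup (Equiv.Perm X) where
  carrier := {π | ∃ g : G, (phi g)⁻¹ * π ∈ finitaryPerms X}
  one_mem' := ⟨1, by simp only [map_one, inv_one, one_mul]; exact one_mem _⟩
  mul_mem' := by
    rintro π π' ⟨g, hg⟩ ⟨g', hg'⟩
    refine ⟨g * g', ?_⟩
    have key : (phi (g * g'))⁻¹ * (π * π')
        = ((phi g')⁻¹ * ((phi g)⁻¹ * π) * phi g') * ((phi g')⁻¹ * π') := by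
      simp only [map_mul]
      group
    rw [key]
    exact mul_mem ((finitaryPerms_normal X).conj_mem' _ hg _) hg'
  inv_mem' := by
    rintro π ⟨g, hg⟩
    refine ⟨g⁻¹, ?_⟩
    have key : (phi g⁻¹)⁻¹ * π⁻¹ = (phi g) * ((phi g)⁻¹ * π)⁻¹ * (phi g)⁻¹ := by
      simp only [map_inv]
      group
    rw [key]
    exact (finitaryPerms_normal X).conj_mem _ (inv_mem hg) _

theorem embeds_into_group_with_faithful_transitive_locFin_action
    {G : Type*} [Group G]
    (h : ∃ (X : Type) (phi : G →* Equiv.Perm X),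
        Function.Injective phi ∧
        ∀ H : Subgroup G, H.FG → ∀ x : X,
          Set.Finite {y : X | ∃ h ∈ H, phi h x = y}) :
    ∃ (K : Type) (instK : Group K) (iota : G →* K),
      Function.Injective iota ∧
      ∃ (Z : Type) (psi : K →* Equiv.Perm Z),
        Function.Injective psi ∧
        (∀ H : Subgroup K, H.FG → ∀ z : Z,
          Set.Finite {w : Z | ∃ k ∈ H, psi k z = w}) ∧
        (∀ z w : Z, ∃ k : K, psi k z = w) := by
  classical
  obtain ⟨X, phi, hinj, hlf⟩ := h
  refine ⟨↥(bigGroup phi), inferInstance,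
    phi.codRestrict (bigGroup phi) (fun g => ⟨g, by rw [inv_mul_cancel]; exact one_mem _⟩), ?_, X,
    (bigGroup phi).subtype, Subtype.coe_injective, ?_, ?_⟩
  · -- iota injective
    intro a b hab
    apply hinj
    exact congrArg Subtype.val hab
  · -- locally finite
    intro H hFG z
    obtain ⟨S, hS⟩ := hFG
    have hgg : ∀ k : ↥(bigGroup phi), ∃ g : G, (phi g)⁻¹ * (k : Equiv.Perm X) ∈ finitaryPerms X :=
      fun k => k.2
    choose gg hgg using hgg
    set G₀ : Subgroup G := Subgroup.closure ↑(S.image gg) with hG₀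
    have hG₀fg : G₀.FG := ⟨S.image gg, rfl⟩
    -- the base set
    set B : Set X := {z} ∪ ⋃ k ∈ S, {x | ((phi (gg k))⁻¹ * (k : Equiv.Perm X)) x ≠ x} with hB
    have hBfin : B.Finite :=
      (Set.finite_singleton z).union (Set.Finite.biUnion S.finite_toSet (fun k _ => hgg k))
    set T : Set X := ⋃ b ∈ B, {y | ∃ g ∈ G₀, phi g b = y} with hT
    have hTfin : T.Finite := hBfin.biUnion (fun b _ => hlf G₀ hG₀fg b)
    have hBT : B ⊆ T := by
      intro b hb
      exact Set.mem_biUnion hb ⟨1, one_mem _, by simp⟩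
    have hzT : z ∈ T := hBT (Or.inl rfl)
    -- each generator maps T into T
    have hmaps : ∀ k ∈ S, ∀ y ∈ T, (k : Equiv.Perm X) y ∈ T := by
      intro k hk y hy
      set σ : Equiv.Perm X := (phi (gg k))⁻¹ * (k : Equiv.Perm X) with hσ
      have hσT : σ y ∈ T := by
        by_cases hfix : σ y = y
        · rw [hfix]; exact hy
        · apply hBT
          right
          refine Set.mem_biUnion hk ?_
          simp only [Set.mem_setOf_eq, ← hσ]
          intro hc
          exact hfix (σ.injective hc)
      rw [hT] at hσT
      obtain ⟨b, hb, hmem⟩ := Set.mem_iUnion₂.mp hσT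
      obtain ⟨g, hgmem, hgb⟩ := hmem
      have hk' : (k : Equiv.Perm X) y = phi (gg k) (σ y) := by
        simp [hσ]
      rw [hk', ← hgb]
      refine Set.mem_biUnion hb ⟨gg k * g, ?_, by simp⟩
      exact mul_mem (Subgroup.subset_closure (Finset.mem_image_of_mem gg hk)) hgmem
    -- each generator stabilizes T (as a set), using finiteness
    have hstab : ∀ k ∈ S, (k : Equiv.Perm X) '' T = T := by
      intro k hk
      apply Set.eq_of_subset_of_ncard_le
      · intro y ⟨x, hx, hxy⟩
        rw [← hxy]; exact hmaps k hk x hx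
      · rw [Set.ncard_image_of_injective _ (k : Equiv.Perm X).injective]
      · exact hTfin
    -- hence H stabilizes T
    have hHle : H ≤ (MulAction.stabilizer (Equiv.Perm X) T).comap (bigGroup phi).subtype := by
      rw [← hS]
      apply Subgroup.closure_le _ |>.mpr
      intro k hk
      simp only [SetLike.mem_coe, Subgroup.mem_comap, MulAction.mem_stabilizer_iff]
      show (k : Equiv.Perm X) • T = T
      have : (k : Equiv.Perm X) • T = (k : Equiv.Perm X) '' T := rfl
      rw [this]
      exact hstab k hk
    apply hTfin.subset
    rintro w ⟨k, hkH, rfl⟩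
    have := hHle hkH
    simp only [Subgroup.mem_comap, MulAction.mem_stabilizer_iff] at this
    have hz : ((bigGroup phi).subtype k) • z ∈ ((bigGroup phi).subtype k) • T :=
      Set.smul_mem_smul_set hzT
    rw [this] at hz
    simpa using hz
  · -- transitive
    intro z w
    refine ⟨⟨Equiv.swap z w, 1, ?_⟩, by simp [Equiv.swap_apply_left]⟩
    rw [map_one, inv_one, one_mul, mem_finitaryPerms]
    apply ((Set.finite_singleton w).insert z).subset
    intro x hx
    simp only [Set.mem_setOf_eq] at hx
    by_contra hc
    simp only [Set.mem_insert_iff, Set.mem_singleton_iff, not_or] at hc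
    exact hx (Equiv.swap_apply_of_ne_of_ne hc.1 hc.2)
end
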